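/- arXiv:2203.09612 — 4 statements merged into one kernel-verified Lean document; each statement's English description precedes it below -/
import Mathlib

section
/- Suppose σ satisfies conditions (a) σ(μ*δ_c) = σ(μ)+c, (b) first-order stochastic dominance monotonicity, and (c) the mixture-convexity condition along couplings. Then ρ(X) := σ(law of X) for X ∈ L^∞(Ω,H,P) is a law-invariant convex risk measure; moreover if σ(δ_0) = 0 then ρ(0) = 0. -/
open MeasureTheory Set

theorem stmt3
    {Ω : Type*} [MeasurableSpace Ω] (P : Measure Ω) [IsProbabilityMeasure P]
    (σ : Measure ℝ → EReal)
    -- (a) translation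
    (ha : ∀ μ : Measure ℝ, IsProbabilityMeasure μ → (∃ M : ℝ, μ (Set.Icc (-M) M)ᶜ = 0) →
      ∀ c : ℝ, σ (Measure.map (fun x => x + c) μ) = σ μ + (c : EReal))
    -- (b) monotonicity with respect to first-order stochastic dominance
    (hb : ∀ μ μ' : Measure ℝ, IsProbabilityMeasure μ → IsProbabilityMeasure μ' →
      (∃ M : ℝ, μ (Set.Icc (-M) M)ᶜ = 0) → (∃ M : ℝ, μ' (Set.Icc (-M) M)ᶜ = 0) →
      (∀ r : ℝ, μ' (Set.Iic r) ≤ μ (Set.Iic r)) → σ μ ≤ σ μ')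
    -- (c) mixture-convexity along couplings
    (hc : ∀ ζ : Measure (ℝ × ℝ), IsProbabilityMeasure ζ →
      (∃ M : ℝ, ζ (Set.Icc (-M) M ×ˢ Set.Icc (-M) M)ᶜ = 0) →
      ∀ θ : ℝ, 0 < θ → θ < 1 →
        σ (Measure.map (fun p : ℝ × ℝ => (1 - θ) * p.1 + θ * p.2) ζ) ≤
          ((1 - θ : ℝ) : EReal) * σ (Measure.map Prod.fst ζ) +
            ((θ : ℝ) : EReal) * σ (Measure.map Prod.snd ζ)) :
    -- ρ(X) := σ(law of X) is a law-invariant convex risk measure on bounded r.v.'s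
    (∀ (Z : Ω → ℝ) (c : ℝ), Measurable Z → (∃ M : ℝ, ∀ ω, |Z ω| ≤ M) →
        σ (Measure.map (fun ω => Z ω + c) P) = σ (Measure.map Z P) + (c : EReal)) ∧
    (∀ Z Z' : Ω → ℝ, Measurable Z → Measurable Z' →
        (∃ M : ℝ, ∀ ω, |Z ω| ≤ M) → (∃ M : ℝ, ∀ ω, |Z' ω| ≤ M) →
        (∀ᵐ ω ∂P, Z ω ≤ Z' ω) → σ (Measure.map Z P) ≤ σ (Measure.map Z' P)) ∧
    (∀ (Z Z' : Ω → ℝ) (θ : ℝ), Measurable Z → Measurable Z' →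
        (∃ M : ℝ, ∀ ω, |Z ω| ≤ M) → (∃ M : ℝ, ∀ ω, |Z' ω| ≤ M) → 0 ≤ θ → θ ≤ 1 →
        σ (Measure.map (fun ω => θ * Z ω + (1 - θ) * Z' ω) P) ≤
          ((θ : ℝ) : EReal) * σ (Measure.map Z P) +
            ((1 - θ : ℝ) : EReal) * σ (Measure.map Z' P)) ∧
    (∀ Z Z' : Ω → ℝ, Measurable Z → Measurable Z' →
        Measure.map Z P = Measure.map Z' P →
        σ (Measure.map Z P) = σ (Measure.map Z' P)) ∧
    (σ (Measure.dirac (0 : ℝ)) = 0 → σ (Measure.map (fun _ : Ω => (0 : ℝ)) P) = 0) := by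
  -- helper: bounded support of the law
  have hsupp : ∀ (Z : Ω → ℝ), Measurable Z → (∃ M : ℝ, ∀ ω, |Z ω| ≤ M) →
      ∃ M : ℝ, (Measure.map Z P) (Set.Icc (-M) M)ᶜ = 0 := by
    intro Z hZ ⟨M, hM⟩
    refine ⟨M, ?_⟩
    rw [Measure.map_apply hZ (measurableSet_Icc.compl)]
    have : Z ⁻¹' (Set.Icc (-M) M)ᶜ = ∅ := by
      ext ω
      simp only [Set.mem_preimage, Set.mem_compl_iff, Set.mem_Icc, Set.mem_empty_iff_false,
        iff_false, not_not]
      exact abs_le.mp (hM ω)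
    rw [this]; simp
  refine ⟨?_, ?_, ?_, ?_, ?_⟩
  · -- translation
    intro Z c hZ hbd
    have h1 : Measure.map (fun ω => Z ω + c) P =
        Measure.map (fun x => x + c) (Measure.map Z P) := by
      have mf : Measurable (fun x : ℝ => x + c) := by fun_prop
      rw [Measure.map_map mf hZ]
      rfl
    rw [h1]
    exact ha _ (Measure.isProbabilityMeasure_map hZ.aemeasurable) (hsupp Z hZ hbd) c
  · -- monotonicity
    intro Z Z' hZ hZ' hbd hbd' hle
    refine hb _ _ (Measure.isProbabilityMeasure_map hZ.aemeasurable)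
      (Measure.isProbabilityMeasure_map hZ'.aemeasurable)
      (hsupp Z hZ hbd) (hsupp Z' hZ' hbd') ?_
    intro r
    rw [Measure.map_apply hZ measurableSet_Iic, Measure.map_apply hZ' measurableSet_Iic]
    apply measure_mono_ae
    filter_upwards [hle] with ω h hω
    exact le_trans h hω
  · -- convexity
    intro Z Z' θ hZ hZ' hbd hbd' hθ0 hθ1
    rcases eq_or_lt_of_le hθ0 with h0 | h0
    · -- θ = 0
      subst h0
      have : (fun ω => (0:ℝ) * Z ω + (1 - 0) * Z' ω) = Z' := by funext ω; ring
      rw [this, EReal.coe_zero, zero_mul, zero_add]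
      have : ((1 - 0 : ℝ) : EReal) = 1 := by norm_num
      rw [this, one_mul]
    · rcases eq_or_lt_of_le hθ1 with h1 | h1
      · -- θ = 1
        subst h1
        have : (fun ω => (1:ℝ) * Z ω + (1 - 1) * Z' ω) = Z := by funext ω; ring
        rw [this]
        have e1 : ((1 - 1 : ℝ) : EReal) = 0 := by norm_num
        have e2 : ((1 : ℝ) : EReal) = 1 := by norm_num
        rw [e1, e2, zero_mul, one_mul, add_zero]
      · -- 0 < θ < 1
        set ζ : Measure (ℝ × ℝ) := Measure.map (fun ω => (Z' ω, Z ω)) P with hζ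
        have hpair : Measurable (fun ω => (Z' ω, Z ω)) := hZ'.prodMk hZ
        have hζprob : IsProbabilityMeasure ζ :=
          Measure.isProbabilityMeasure_map hpair.aemeasurable
        obtain ⟨M, hM⟩ := hbd
        obtain ⟨M', hM'⟩ := hbd'
        have hζbd : ∃ N : ℝ, ζ (Set.Icc (-N) N ×ˢ Set.Icc (-N) N)ᶜ = 0 := by
          refine ⟨max M M', ?_⟩
          rw [hζ, Measure.map_apply hpair ((measurableSet_Icc.prod measurableSet_Icc).compl)]
          have : (fun ω => (Z' ω, Z ω)) ⁻¹' (Set.Icc (-(max M M')) (max M M') ×ˢ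
              Set.Icc (-(max M M')) (max M M'))ᶜ = ∅ := by
            ext ω
            simp only [Set.mem_preimage, Set.mem_compl_iff, Set.mem_prod, Set.mem_Icc,
              Set.mem_empty_iff_false, iff_false, not_not]
            constructor
            · constructor
              · linarith [abs_le.mp (hM' ω) |>.1, le_max_right M M']
              · linarith [abs_le.mp (hM' ω) |>.2, le_max_right M M']
            · constructor
              · linarith [abs_le.mp (hM ω) |>.1, le_max_left M M']
              · linarith [abs_le.mp (hM ω) |>.2, le_max_left M M']
          rw [this]; simp
        have key := hc ζ hζprob hζbd θ h0 h1
        have hfst : Measure.map Prod.fst ζ = Measure.map Z' P := by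
          rw [hζ, Measure.map_map measurable_fst hpair]; rfl
        have hsnd : Measure.map Prod.snd ζ = Measure.map Z P := by
          rw [hζ, Measure.map_map measurable_snd hpair]; rfl
        have hcomb : Measure.map (fun p : ℝ × ℝ => (1 - θ) * p.1 + θ * p.2) ζ =
            Measure.map (fun ω => θ * Z ω + (1 - θ) * Z' ω) P := by
          rw [hζ, Measure.map_map (by fun_prop) hpair]
          congr 1
          funext ω
          simp only [Function.comp_apply]
          ring
        rw [hfst, hsnd, hcomb] at key
        calc σ (Measure.map (fun ω => θ * Z ω + (1 - θ) * Z' ω) P) ≤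
            ((1 - θ : ℝ) : EReal) * σ (Measure.map Z' P) +
              ((θ : ℝ) : EReal) * σ (Measure.map Z P) := key
          _ = _ := add_comm _ _
  · -- law invariance
    intro Z Z' _ _ h
    rw [h]
  · -- normalization
    intro h0
    rw [Measure.map_const]
    simpa using h0
end

section
/- Let Y, Z be topological spaces, f : Y × Z → ℝ lower semicontinuous, and φ : Y → 2^Z nonempty compact-valued and upper hemicontinuous. Then for each y ∈ Y the infimum inf_{z ∈ φ(y)} f(y,z) is attained, and the value function y ↦ inf_{z ∈ φ(y)} f(y,z) is lower semicontinuous on Y. -/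
open Set

theorem stmt13
    {Y Z : Type*} [TopologicalSpace Y] [TopologicalSpace Z]
    (f : Y × Z → ℝ) (hflsc : LowerSemicontinuous f)
    (φ : Y → Set Z)
    (hne : ∀ y, (φ y).Nonempty)
    (hcomp : ∀ y, IsCompact (φ y))
    (huhc : ∀ y, ∀ U : Set Z, IsOpen U → φ y ⊆ U →
      ∃ V : Set Y, IsOpen V ∧ y ∈ V ∧ ∀ y' ∈ V, φ y' ⊆ U) :
    (∀ y, ∃ z ∈ φ y, ∀ z' ∈ φ y, f (y, z) ≤ f (y, z')) ∧
    LowerSemicontinuous (fun y => sInf ((fun z => f (y, z)) '' φ y)) := by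
  have hg : ∀ y : Y, LowerSemicontinuous (fun z => f (y, z)) := by
    intro y
    rw [lowerSemicontinuous_iff_isOpen_preimage]
    intro c
    exact (hflsc.isOpen_preimage c).preimage (continuous_const.prodMk continuous_id)
  have hmin : ∀ y, ∃ z ∈ φ y, ∀ z' ∈ φ y, f (y, z) ≤ f (y, z') := by
    intro y
    by_contra h
    push_neg at h
    have h' : ∀ z : φ y, ∃ w ∈ φ y, f (y, w) < f (y, (z : Z)) := by
      intro z
      obtain ⟨w, hw, hlt⟩ := h z z.2
      exact ⟨w, hw, hlt⟩
    choose w hwmem hwlt using h'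
    set U : φ y → Set Z := fun i => {v | f (y, w i) < f (y, v)} with hU
    have hUopen : ∀ i, IsOpen (U i) := fun i => (hg y).isOpen_preimage _
    have hcov : φ y ⊆ ⋃ i, U i := fun z hz =>
      mem_iUnion.2 ⟨⟨z, hz⟩, hwlt ⟨z, hz⟩⟩
    obtain ⟨T, hT⟩ := (hcomp y).elim_finite_subcover U hUopen hcov
    have hTne : T.Nonempty := by
      rcases hne y with ⟨z, hz⟩
      rcases mem_iUnion₂.1 (hT hz) with ⟨i, hi, _⟩
      exact ⟨i, hi⟩
    obtain ⟨i0, hi0, hmin'⟩ := T.exists_min_image (fun i => f (y, w i)) hTne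
    rcases mem_iUnion₂.1 (hT (hwmem i0)) with ⟨j, hj, hlt⟩
    exact absurd (hmin' j hj) (not_le.2 hlt)
  refine ⟨hmin, ?_⟩
  intro y c hc
  obtain ⟨z0, hz0, hz0min⟩ := hmin y
  have hval : sInf ((fun z => f (y, z)) '' φ y) = f (y, z0) :=
    IsLeast.csInf_eq ⟨⟨z0, hz0, rfl⟩, by rintro _ ⟨z, hz, rfl⟩; exact hz0min z hz⟩
  replace hc : c < f (y, z0) := by simpa [hval] using hc
  set c' := (c + f (y, z0)) / 2 with hc'
  have hc1 : c < c' := by rw [hc']; linarith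
  have hc2 : c' < f (y, z0) := by rw [hc']; linarith
  have hloc : ∀ z : φ y, ∃ s : Set Y, ∃ t : Set Z, IsOpen s ∧ IsOpen t ∧ y ∈ s ∧
      (z : Z) ∈ t ∧ ∀ p ∈ s ×ˢ t, c' < f p := by
    intro z
    have hev : ∀ᶠ p in nhds (y, (z : Z)), c' < f p :=
      hflsc (y, (z : Z)) c' (lt_of_lt_of_le hc2 (hz0min z z.2))
    rcases mem_nhds_prod_iff'.1 hev with ⟨u, v, hu, hyu, hv, hzv, hsub⟩
    exact ⟨u, v, hu, hv, hyu, hzv, fun p hp => hsub hp⟩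
  choose s t hs ht hys hzt hst using hloc
  have hcov : φ y ⊆ ⋃ i, t i := fun z hz => mem_iUnion.2 ⟨⟨z, hz⟩, hzt ⟨z, hz⟩⟩
  obtain ⟨T, hT⟩ := (hcomp y).elim_finite_subcover t ht hcov
  obtain ⟨W, hW, hyW, hWsub⟩ := huhc y (⋃ i ∈ T, t i)
    (isOpen_biUnion fun i _ => ht i) hT
  set V := W ∩ ⋂ i ∈ T, s i with hV
  have hVopen : IsOpen V := hW.inter (isOpen_biInter_finset fun i _ => hs i)
  have hyV : y ∈ V := ⟨hyW, mem_biInter fun i _ => hys i⟩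
  filter_upwards [hVopen.mem_nhds hyV] with y' hy'
  have hlow : ∀ z ∈ φ y', c' < f (y', z) := by
    intro z hz
    rcases mem_iUnion₂.1 (hWsub y' hy'.1 hz) with ⟨i, hi, hzt'⟩
    exact hst i (y', z) ⟨(mem_iInter₂.1 hy'.2) i hi, hzt'⟩
  have : c' ≤ sInf ((fun z => f (y', z)) '' φ y') := by
    apply le_csInf ((hne y').image _)
    rintro _ ⟨z, hz, rfl⟩
    exact (hlow z hz).le
  exact lt_of_lt_of_le hc1 this
end

section
/- Let Y be a separable metric space and 𝒫 the set of Borel probability measures on Y. Then the Borel σ-algebra of the weak topology on 𝒫 coincides with the σ-algebra generated by the evaluation maps ν ↦ ν(A) for A Borel in Y. -/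
open MeasureTheory Set Topology Metric Filter ENNReal NNReal BoundedContinuousFunction

lemma stmt15_aux_eval_measurable {Y : Type*} [MetricSpace Y] [MeasurableSpace Y] [BorelSpace Y]
    {A : Set Y} (hA : MeasurableSet A) :
    Measurable[borel (ProbabilityMeasure Y)]
      (fun ν : ProbabilityMeasure Y ↦ (ν : Measure Y) A) := by
  letI : MeasurableSpace (ProbabilityMeasure Y) := borel _
  haveI : BorelSpace (ProbabilityMeasure Y) := ⟨rfl⟩
  refine MeasurableSpace.induction_on_inter
    (C := fun A _ ↦ Measurable (fun ν : ProbabilityMeasure Y ↦ (ν : Measure Y) A))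
    (borel_eq_generateFrom_isClosed (α := Y) ▸ BorelSpace.measurable_eq)
    (fun _ h1 _ h2 _ ↦ h1.inter h2) (by simp) ?_ ?_ ?_ A hA
  · intro F hF
    have key : ∀ n : ℕ, Continuous fun ν : ProbabilityMeasure Y ↦
        (∫⁻ y, (hF.apprSeq n y : ℝ≥0∞) ∂(ν : Measure Y)) := by
      intro n
      have cont := ProbabilityMeasure.continuous_testAgainstNN_eval (Ω := Y) (hF.apprSeq n)
      have eq : (fun ν : ProbabilityMeasure Y ↦ (∫⁻ y, (hF.apprSeq n y : ℝ≥0∞) ∂(ν : Measure Y)))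
          = fun ν : ProbabilityMeasure Y ↦
            ((ν.toFiniteMeasure.testAgainstNN (hF.apprSeq n) : ℝ≥0) : ℝ≥0∞) := by
        funext ν
        rw [FiniteMeasure.testAgainstNN_coe_eq]
        rfl
      rw [eq]
      exact ENNReal.continuous_coe.comp cont
    apply measurable_of_tendsto_metrizable (fun n ↦ (key n).measurable)
    exact tendsto_pi_nhds.mpr fun ν ↦ HasOuterApproxClosed.tendsto_lintegral_apprSeq hF _
  · intro A hA ih
    have h : ∀ ν : ProbabilityMeasure Y, (ν : Measure Y) Aᶜ = 1 - (ν : Measure Y) A := by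
      intro ν
      rw [measure_compl hA (measure_ne_top _ _), measure_univ]
    simpa [h] using Measurable.const_sub ih 1
  · intro f hdisj hf ih
    have h : ∀ ν : ProbabilityMeasure Y,
        (ν : Measure Y) (⋃ n, f n) = ∑' n, (ν : Measure Y) (f n) :=
      fun ν ↦ measure_iUnion hdisj hf
    simpa [h] using Measurable.ennreal_tsum ih

lemma stmt15_aux_nhds {Y : Type*} [MetricSpace Y] [MeasurableSpace Y]
    (t₁ : TopologicalSpace (ProbabilityMeasure Y)) (P : ProbabilityMeasure Y) (G : Set Y)
    (hopen : ∀ q : ℚ, IsOpen[t₁] {ν : ProbabilityMeasure Y | ENNReal.ofReal q < (ν : Measure Y) G})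
    {d : ℝ} (hd : 0 < d) :
    {Q : ProbabilityMeasure Y | (P : Measure Y) G < (Q : Measure Y) G + ENNReal.ofReal d}
      ∈ @nhds _ t₁ P := by
  by_cases h0 : (P : Measure Y) G = 0
  · refine Filter.mem_of_superset Filter.univ_mem ?_
    intro Q _
    simp only [mem_setOf_eq, h0]
    exact lt_of_lt_of_le (ENNReal.ofReal_pos.mpr hd) le_add_self
  · set p := ((P : Measure Y) G).toReal with hp_def
    have hPG_ne_top : (P : Measure Y) G ≠ ∞ := measure_ne_top _ _
    have hp : 0 < p := ENNReal.toReal_pos h0 hPG_ne_top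
    have hl : p - min d p < p := by
      have : 0 < min d p := lt_min hd hp
      linarith
    obtain ⟨q, hq1, hq2⟩ := exists_rat_btwn hl
    have hq0 : (0:ℝ) ≤ (q:ℝ) := le_trans (by simp [le_min hd.le hp.le]) hq1.le
    have hPmem : P ∈ {ν : ProbabilityMeasure Y | ENNReal.ofReal q < (ν : Measure Y) G} := by
      have : ENNReal.ofReal q < ENNReal.ofReal p := (ENNReal.ofReal_lt_ofReal_iff hp).mpr hq2
      simpa [mem_setOf_eq, hp_def, ENNReal.ofReal_toReal hPG_ne_top] using this
    refine Filter.mem_of_superset ((hopen q).mem_nhds hPmem) ?_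
    intro Q hQ
    simp only [mem_setOf_eq] at hQ ⊢
    have h1 : (P : Measure Y) G ≤ ENNReal.ofReal q + ENNReal.ofReal d := by
      rw [← ENNReal.ofReal_add hq0 hd.le, ← ENNReal.ofReal_toReal hPG_ne_top]
      apply ENNReal.ofReal_le_ofReal
      have : p - d ≤ p - min d p := by
        have : min d p ≤ d := min_le_left _ _
        linarith
      linarith
    exact lt_of_le_of_lt h1 (ENNReal.add_lt_add_right ENNReal.ofReal_ne_top hQ)

theorem stmt15
    {Y : Type*} [MetricSpace Y] [TopologicalSpace.SeparableSpace Y]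
    [MeasurableSpace Y] [BorelSpace Y] :
    borel (ProbabilityMeasure Y) =
      MeasurableSpace.generateFrom
        {S : Set (ProbabilityMeasure Y) |
          ∃ (A : Set Y) (B : Set ENNReal), MeasurableSet A ∧ MeasurableSet B ∧
            S = {ν : ProbabilityMeasure Y | (ν : Measure Y) A ∈ B}} := by
  set 𝒮 := {S : Set (ProbabilityMeasure Y) |
      ∃ (A : Set Y) (B : Set ENNReal), MeasurableSet A ∧ MeasurableSet B ∧
        S = {ν : ProbabilityMeasure Y | (ν : Measure Y) A ∈ B}} with h𝒮
  refine le_antisymm ?_ ?_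
  swap
  · -- easy direction: generateFrom 𝒮 ≤ borel
    refine MeasurableSpace.generateFrom_le ?_
    rintro S ⟨A, B, hA, hB, rfl⟩
    exact stmt15_aux_eval_measurable hA hB
  · -- hard direction
    by_cases hY : IsEmpty Y
    · refine le_of_eq (MeasurableSpace.ext fun s ↦ ?_)
      haveI : IsEmpty (ProbabilityMeasure Y) := by
        constructor
        intro ν
        have h1 : (ν : Measure Y) univ = 1 := measure_univ
        rw [Set.univ_eq_empty_iff.mpr hY, measure_empty] at h1
        exact zero_ne_one h1
      rw [Set.eq_empty_of_isEmpty s]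
      exact iff_of_true (MeasurableSpace.measurableSet_empty _) (MeasurableSpace.measurableSet_empty _)
    rw [not_isEmpty_iff] at hY
    obtain ⟨xs, xs_dense⟩ := TopologicalSpace.exists_dense_seq Y
    set GG : Finset ℕ → ℚ → Set Y := fun t r ↦ ⋃ j ∈ t, ball (xs j) (r : ℝ) with hGG
    set S₁ : Set (Set (ProbabilityMeasure Y)) :=
      Set.range (fun p : Finset ℕ × ℚ × ℚ ↦
        {ν : ProbabilityMeasure Y | ENNReal.ofReal p.2.2 < (ν : Measure Y) (GG p.1 p.2.1)})
      with hS₁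
    set t₁ : TopologicalSpace (ProbabilityMeasure Y) := TopologicalSpace.generateFrom S₁ with ht₁
    have S₁_count : S₁.Countable := Set.countable_range _
    have GG_open : ∀ t r, IsOpen (GG t r) := fun t r ↦ isOpen_biUnion fun _ _ ↦ isOpen_ball
    have S₁_meas : ∀ s ∈ S₁, MeasurableSet[MeasurableSpace.generateFrom 𝒮] s := by
      rintro s ⟨⟨t, r, q⟩, rfl⟩
      apply MeasurableSpace.measurableSet_generateFrom
      exact ⟨GG t r, Set.Ioi (ENNReal.ofReal q), (GG_open t r).measurableSet,
        measurableSet_Ioi, rfl⟩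
    -- key topological fact: every weakly open set is t₁-open
    have key : ∀ U : Set (ProbabilityMeasure Y),
        IsOpen[ProbabilityMeasure.instTopologicalSpace] U → IsOpen[t₁] U := by
      have H : @Continuous (ProbabilityMeasure Y) (LevyProkhorov (ProbabilityMeasure Y)) t₁ _
          (LevyProkhorov.toMeasureEquiv (α := ProbabilityMeasure Y)).symm := by
        rw [@continuous_iff_continuousAt _ _ t₁ _]
        intro P
        rw [ContinuousAt, Metric.tendsto_nhds]
        intro ε ε_pos
        have third_pos : 0 < ε / 3 := by linarith
        have sixth_pos : 0 < ε / 6 := by linarith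
        have third_pos' : 0 < ENNReal.ofReal (ε / 3) := ENNReal.ofReal_pos.mpr third_pos
        set Bs : ℕ → Set Y := fun n ↦ ball (xs n) (ε / 6) with hBs
        set As : ℕ → Set Y := disjointed Bs with hAs
        have As_mble : ∀ n, MeasurableSet (As n) :=
          MeasurableSet.disjointed (fun n ↦ measurableSet_ball)
        have As_sub : ∀ n, As n ⊆ Bs n := disjointed_subset Bs
        have As_cover : ⋃ n, As n = univ := by
          have aux : ⋃ n, Bs n = univ := by
            convert DenseRange.iUnion_uniformity_ball xs_dense
              (Metric.dist_mem_uniformity sixth_pos)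
            exact (ball_eq_ball' _ _).symm
          simpa only [← aux] using iUnion_disjointed
        have As_disj : Pairwise (fun n m ↦ Disjoint (As n) (As m)) := disjoint_disjointed Bs
        obtain ⟨N, hN⟩ : ∃ N, (P : Measure Y) (⋃ j ∈ Iio N, As j)ᶜ < ENNReal.ofReal (ε / 3) := by
          have exhaust := @tendsto_measure_biUnion_Ici_zero_of_pairwise_disjoint Y _
            (P : Measure Y) _ As (fun n ↦ (As_mble n).nullMeasurableSet) As_disj
          simp only [tendsto_atTop_nhds, Function.comp_apply] at exhaust
          obtain ⟨N, hN⟩ := exhaust (Iio (ENNReal.ofReal (ε / 3))) third_pos' isOpen_Iio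
          refine ⟨N, ?_⟩
          have rewr : ⋃ i, ⋃ (_ : N ≤ i), As i = (⋃ i, ⋃ (_ : i < N), As i)ᶜ := by
            simpa only [mem_Iio, compl_Iio, mem_Ici] using
              (biUnion_compl_eq_of_pairwise_disjoint_of_iUnion_eq_univ As_cover As_disj
                (Iio N)).symm
          simpa only [mem_Iio, ← rewr, gt_iff_lt] using hN N le_rfl
        obtain ⟨r, hr1, hr2⟩ := exists_rat_btwn (show ε / 6 < ε / 3 by linarith)
        have Js_finite : Set.Finite {J : Set ℕ | J ⊆ Iio N} :=
          Set.Finite.finite_subsets (finite_Iio N)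
        set Gs : Set ℕ → Set Y := fun J ↦ ⋃ j ∈ J, ball (xs j) (r : ℝ) with hGs
        have Gs_nhds : ∀ J ∈ {J : Set ℕ | J ⊆ Iio N},
            {Q : ProbabilityMeasure Y |
              (P : Measure Y) (Gs J) < (Q : Measure Y) (Gs J) + ENNReal.ofReal (ε / 3)}
              ∈ @nhds _ t₁ P := by
          intro J hJ
          have hfin : J.Finite := (finite_Iio N).subset hJ
          have hGeq : Gs J = GG hfin.toFinset r := by
            simp only [hGs, hGG]
            ext y
            simp [Set.Finite.mem_toFinset]
          rw [hGeq]
          refine stmt15_aux_nhds t₁ P (GG hfin.toFinset r) ?_ third_pos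
          intro q
          exact TopologicalSpace.isOpen_generateFrom_of_mem ⟨(hfin.toFinset, r, q), rfl⟩
        filter_upwards [(Finset.iInter_mem_sets Js_finite.toFinset).mpr
          fun J hJ ↦ Gs_nhds J (Js_finite.mem_toFinset.mp hJ)] with Q hQ
        simp only [Set.Finite.mem_toFinset, mem_iInter, mem_setOf_eq] at hQ
        apply lt_of_le_of_lt ?_ (show 2 * (ε / 3) < ε by linarith)
        rw [dist_comm, LevyProkhorov.dist_probabilityMeasure_def]
        apply levyProkhorovDist_le_of_forall_le _ _ (by linarith) (fun δ B δ_gt _ ↦ ?_)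
        set JB := {i | B ∩ As i ≠ ∅ ∧ i ∈ Iio N} with hJB
        have B_subset : B ⊆ Gs JB ∪ (⋃ j ∈ Iio N, As j)ᶜ := by
          suffices B ⊆ (⋃ i ∈ JB, ball (xs i) (r : ℝ)) ∪ ⋃ j ∈ Ici N, As j by
            refine this.trans <| union_subset_union le_rfl ?_
            intro ω hω
            simp only [mem_Ici, mem_iUnion, exists_prop] at hω
            obtain ⟨i, i_large, ω_in⟩ := hω
            by_contra con
            simp only [mem_Iio, compl_iUnion, mem_iInter, mem_compl_iff, not_forall, not_not,
              exists_prop] at con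
            obtain ⟨j, j_small, ω_in'⟩ := con
            exact disjoint_left.mp (As_disj (show j ≠ i by omega)) ω_in' ω_in
          intro ω ω_in_B
          obtain ⟨i, hi⟩ : ∃ n, ω ∈ As n := by
            simp only [← mem_iUnion, As_cover, mem_univ]
          simp only [mem_Ici, mem_union, mem_iUnion, exists_prop]
          by_cases i_small : i ∈ Iio N
          · refine Or.inl ⟨i, ?_, ?_⟩
            · exact ⟨nonempty_iff_ne_empty.mp <| Set.nonempty_of_mem <| mem_inter ω_in_B hi,
                i_small⟩
            · have : ω ∈ Bs i := As_sub i hi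
              exact ball_subset_ball (by linarith) this
          · exact Or.inr ⟨i, by simpa only [mem_Iio, not_lt] using i_small, hi⟩
        have subset_thickB : Gs JB ⊆ thickening δ B := by
          intro ω ω_in
          simp only [hGs, mem_iUnion, exists_prop] at ω_in
          obtain ⟨k, ⟨B_inter, _⟩, ω_in_ball⟩ := ω_in
          obtain ⟨z, z_in_B, z_in_As⟩ := nonempty_iff_ne_empty.mpr B_inter
          rw [mem_thickening_iff]
          refine ⟨z, z_in_B, ?_⟩
          have h1 : dist ω (xs k) < (r : ℝ) := mem_ball.mp ω_in_ball
          have h2 : dist z (xs k) < ε / 6 := mem_ball.mp (As_sub k z_in_As)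
          calc dist ω z ≤ dist ω (xs k) + dist (xs k) z := dist_triangle ω (xs k) z
            _ = dist ω (xs k) + dist z (xs k) := by rw [dist_comm (xs k) z]
            _ < (r : ℝ) + ε / 6 := by linarith
            _ < δ := by linarith
        apply (measure_mono B_subset).trans ((measure_union_le _ _).trans ?_)
        have hQ' := hQ JB (fun i hi ↦ hi.2)
        apply (add_le_add hQ'.le hN.le).trans
        rw [add_assoc, ← ENNReal.ofReal_add third_pos.le third_pos.le, ← two_mul]
        exact add_le_add (measure_mono subset_thickB) (ENNReal.ofReal_le_ofReal δ_gt.le)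
      intro U hU
      have h2 : IsOpen[TopologicalSpace.coinduced
          (LevyProkhorov.toMeasure (α := ProbabilityMeasure Y)) inferInstance] U := by
        rw [← LevyProkhorov.eq_convergenceInDistribution]
        exact hU
      rw [isOpen_coinduced] at h2
      exact H.isOpen_preimage _ h2
    -- conclude
    have basis := @TopologicalSpace.isTopologicalBasis_of_subbasis _ t₁ S₁ ht₁
    refine MeasurableSpace.generateFrom_le ?_
    intro U hU
    rw [mem_setOf_eq] at hU
    obtain ⟨S, hS_sub, rfl⟩ :=
      TopologicalSpace.IsTopologicalBasis.open_eq_sUnion basis (key U hU)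
    have hS_count : S.Countable :=
      ((Set.countable_setOf_finite_subset S₁_count).image _).mono hS_sub
    refine MeasurableSet.sUnion hS_count ?_
    intro u hu
    obtain ⟨f, ⟨hf_fin, hf_sub⟩, rfl⟩ := hS_sub hu
    exact MeasurableSet.sInter hf_fin.countable fun s hs ↦ S₁_meas s (hf_sub hs)
end

section
/- Let γ ∈ [0,1) and suppose the Bellman operators S_t satisfy the contraction estimate |S_t u(x) - S_t w(x)| ≤ γ ‖u - w‖_∞ for all bounded measurable u, w : X → ℝ, t ∈ ℕ, x ∈ X. If (J_t)_{t∈ℕ} and (J'_t)_{t∈ℕ} are two uniformly bounded families of measurable functions both satisfying J_t = S_t J_{t+1} and J'_t = S_t J'_{t+1} for all t ∈ ℕ, then J_t = J'_t for all t ∈ ℕ. -/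
theorem stmt18
    {X : Type*} [MeasurableSpace X]
    (γ : ℝ) (hγ0 : 0 ≤ γ) (hγ1 : γ < 1)
    (S : ℕ → (X → ℝ) → X → ℝ)
    (hcontr : ∀ (t : ℕ) (u w : X → ℝ), Measurable u → Measurable w →
      (∃ M : ℝ, ∀ x, |u x| ≤ M) → (∃ M : ℝ, ∀ x, |w x| ≤ M) →
      ∀ D : ℝ, 0 ≤ D → (∀ x, |u x - w x| ≤ D) →
        ∀ x, |S t u x - S t w x| ≤ γ * D)
    (J J' : ℕ → X → ℝ)
    (hJmeas : ∀ t, Measurable (J t)) (hJ'meas : ∀ t, Measurable (J' t))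
    (hJbdd : ∃ M : ℝ, ∀ t x, |J t x| ≤ M) (hJ'bdd : ∃ M : ℝ, ∀ t x, |J' t x| ≤ M)
    (hJfix : ∀ t, J t = S t (J (t + 1))) (hJ'fix : ∀ t, J' t = S t (J' (t + 1))) :
    ∀ t, J t = J' t := by
  obtain ⟨M, hM⟩ := hJbdd
  obtain ⟨M', hM'⟩ := hJ'bdd
  set D : ℝ := max (M + M') 0 with hD
  have hD0 : 0 ≤ D := le_max_right _ _
  have key : ∀ n t x, |J t x - J' t x| ≤ γ ^ n * D := by
    intro n
    induction n with
    | zero =>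
      intro t x
      simp only [pow_zero, one_mul]
      calc |J t x - J' t x| ≤ |J t x| + |J' t x| := abs_sub _ _
        _ ≤ M + M' := add_le_add (hM t x) (hM' t x)
        _ ≤ D := le_max_left _ _
    | succ n ih =>
      intro t x
      rw [hJfix t, hJ'fix t]
      have := hcontr t (J (t+1)) (J' (t+1)) (hJmeas _) (hJ'meas _)
        ⟨M, hM (t+1)⟩ ⟨M', hM' (t+1)⟩ (γ ^ n * D)
        (mul_nonneg (pow_nonneg hγ0 n) hD0) (ih (t+1)) x
      calc |S t (J (t+1)) x - S t (J' (t+1)) x| ≤ γ * (γ ^ n * D) := this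
        _ = γ ^ (n+1) * D := by ring
  intro t
  funext x
  have h0 : |J t x - J' t x| ≤ 0 := by
    have hlim : Filter.Tendsto (fun n => γ ^ n * D) Filter.atTop (nhds 0) := by
      simpa using (tendsto_pow_atTop_nhds_zero_of_lt_one hγ0 hγ1).mul_const D
    exact ge_of_tendsto hlim (Filter.Eventually.of_forall fun n => key n t x)
  have := abs_nonneg (J t x - J' t x)
  linarith [abs_nonneg (J t x - J' t x), sub_eq_zero.mp (abs_eq_zero.mp (le_antisymm h0 this))]
end
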